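/- Suppose the grade m is even, m ≥ 2. Then for every real inner product space and every family of vectors (V_w), ⟨(id−E)∘(id−S), (id−E)∘J^{⋆m}⟩ = 0, where the inner product is taken over the words of length m. (This is the vanishing of the linear perturbation term which makes the sinhlog integrator optimal at odd strong orders n = m−1.) -/

import Mathlib

open Finsupp

/-- Words over the alphabet `A = {0,1,…,d}`. -/
abbrev Word (d : ℕ) : Type := List (Fin (d+1))

/-- The free real vector space with basis the set of all words. -/
abbrev KA (d : ℕ) : Type := Word d →₀ ℝ

/-- Shuffle product of two words, as an element of `KA d`. -/
noncomputable def shuffleWord (d : ℕ) : Word d → Word d → KA d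
  | [], v => Finsupp.single v 1
  | a :: u, [] => Finsupp.single (a :: u) 1
  | a :: u, b :: v =>
      Finsupp.mapDomain (List.cons a) (shuffleWord d u (b :: v)) +
      Finsupp.mapDomain (List.cons b) (shuffleWord d (a :: u) v)
  termination_by u v => u.length + v.length

/-- Bilinear extension of the shuffle product to `KA d`. -/
noncomputable def sh (d : ℕ) (x y : KA d) : KA d :=
  x.sum fun u cu => y.sum fun v cv => (cu * cv) • shuffleWord d u v

/-- Admissible words: concatenations of blocks each of which is the single
letter `0` or a pair `aa` with `a ≠ 0`. -/
inductive Admissible (d : ℕ) : Word d → Prop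
  | nil : Admissible d []
  | zero {w : Word d} : Admissible d w → Admissible d (0 :: w)
  | pair {w : Word d} (a : Fin (d+1)) : a ≠ 0 → Admissible d w →
      Admissible d (a :: a :: w)

/-- Number of `0` letters. -/
def zc (d : ℕ) (w : Word d) : ℕ := w.count 0

/-- Half the number of nonzero letters. -/
def dc (d : ℕ) (w : Word d) : ℕ := (w.length - w.count 0) / 2

def nc (d : ℕ) (w : Word d) : ℕ := zc d w + dc d w

open Classical in
/-- The expectation map on words. -/
noncomputable def Ebar (d : ℕ) (t : ℝ) (w : Word d) : ℝ :=
  if Admissible d w then t ^ nc d w / (2 ^ dc d w * Nat.factorial (nc d w)) else 0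

/-- Linear extension of the expectation map to `KA d`. -/
noncomputable def EbarL (d : ℕ) (t : ℝ) (x : KA d) : ℝ :=
  x.sum fun w c => c * Ebar d t w

/-- The linear endomorphism of `KA d` determined by values on basis words. -/
noncomputable def wordLift (d : ℕ) (f : Word d → KA d) : KA d →ₗ[ℝ] KA d :=
  Finsupp.lsum ℝ fun w => LinearMap.toSpanSingleton ℝ (KA d) (f w)

/-- The identity endomorphism `id`. -/
noncomputable def idE (d : ℕ) : KA d →ₗ[ℝ] KA d := LinearMap.id

/-- The reversal endomorphism `|S|`. -/
noncomputable def revE (d : ℕ) : KA d →ₗ[ℝ] KA d :=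
  wordLift d fun w => Finsupp.single w.reverse 1

/-- The antipode `S`. -/
noncomputable def Sa (d : ℕ) : KA d →ₗ[ℝ] KA d :=
  wordLift d fun w => Finsupp.single w.reverse ((-1 : ℝ) ^ w.length)

/-- The convolution unit `ν`. -/
noncomputable def nuE (d : ℕ) : KA d →ₗ[ℝ] KA d :=
  wordLift d fun w => if w = [] then Finsupp.single ([] : Word d) 1 else 0

/-- The expectation endomorphism `E`. -/
noncomputable def EE (d : ℕ) (t : ℝ) : KA d →ₗ[ℝ] KA d :=
  wordLift d fun w => Finsupp.single ([] : Word d) (Ebar d t w)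

/-- The convolution product `X ⋆ Y`. -/
noncomputable def conv (d : ℕ) (X Y : KA d →ₗ[ℝ] KA d) : KA d →ₗ[ℝ] KA d :=
  wordLift d fun w => ∑ k ∈ Finset.range (w.length + 1),
    sh d (X (Finsupp.single (w.take k) 1)) (Y (Finsupp.single (w.drop k) 1))

/-- Convolution powers, `X^{⋆0} = ν`. -/
noncomputable def convPow (d : ℕ) (X : KA d →ₗ[ℝ] KA d) : ℕ → (KA d →ₗ[ℝ] KA d)
  | 0 => nuE d
  | k + 1 => conv d X (convPow d X k)

/-- The inner product `⟨X,Y⟩` of endomorphisms, taken over the words of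
length `n`, relative to the family of vectors `Vf`. -/
noncomputable def ip (d : ℕ) (t : ℝ) {H : Type*} [NormedAddCommGroup H]
    [InnerProductSpace ℝ H] (Vf : Word d → H) (n : ℕ)
    (X Y : KA d →ₗ[ℝ] KA d) : ℝ :=
  ∑ u : Fin n → Fin (d+1), ∑ v : Fin n → Fin (d+1),
    EbarL d t (sh d (X (Finsupp.single (List.ofFn u) 1))
                    (Y (Finsupp.single (List.ofFn v) 1))) *
      (inner ℝ (Vf (List.ofFn u)) (Vf (List.ofFn v)) : ℝ)

/-- Positive semidefiniteness of the expectation Gram matrix at grade `n`: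
indexed by the words of length `n` together with the empty word. -/
def gramPSD (d n : ℕ) (t : ℝ) : Prop :=
  ∀ c : Option (Fin n → Fin (d+1)) → ℝ,
    0 ≤ ∑ x : Option (Fin n → Fin (d+1)), ∑ y : Option (Fin n → Fin (d+1)),
      c x * c y *
        EbarL d t (shuffleWord d (x.elim ([] : Word d) List.ofFn)
                                 (y.elim ([] : Word d) List.ofFn))


/-! ### Auxiliary lemmas -/

lemma shuffleWord_nil_left (d : ℕ) (v : Word d) :
    shuffleWord d [] v = Finsupp.single v 1 := by
  rw [shuffleWord]

lemma shuffleWord_nil_right (d : ℕ) (w : Word d) :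
    shuffleWord d w [] = Finsupp.single w 1 := by
  cases w <;> rw [shuffleWord]

lemma shuffleWord_cons_cons (d : ℕ) (a b : Fin (d+1)) (u v : Word d) :
    shuffleWord d (a :: u) (b :: v) =
      Finsupp.mapDomain (List.cons a) (shuffleWord d u (b :: v)) +
      Finsupp.mapDomain (List.cons b) (shuffleWord d (a :: u) v) := by
  rw [shuffleWord]

theorem shuffle_snoc (d : ℕ) (p q : Word d) (a b : Fin (d+1)) :
    shuffleWord d (p ++ [a]) (q ++ [b]) =
      Finsupp.mapDomain (· ++ [a]) (shuffleWord d p (q ++ [b])) +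
      Finsupp.mapDomain (· ++ [b]) (shuffleWord d (p ++ [a]) q) := by
  match p, q with
  | [], [] =>
      simp only [List.nil_append, shuffleWord_nil_left, shuffleWord_nil_right,
        shuffleWord_cons_cons, Finsupp.mapDomain_single, List.singleton_append]
      abel
  | [], e :: q' =>
      have h1 : shuffleWord d [a] (q' ++ [b]) =
          Finsupp.mapDomain (· ++ [a]) (shuffleWord d [] (q' ++ [b])) +
          Finsupp.mapDomain (· ++ [b]) (shuffleWord d [a] q') := by
        simpa using shuffle_snoc d [] q' a b
      rw [show ([] : Word d) ++ [a] = [a] from rfl,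
        show (e :: q') ++ [b] = e :: (q' ++ [b]) from rfl,
        shuffleWord_cons_cons, h1]
      rw [shuffleWord_nil_left, shuffleWord_nil_left,
        shuffleWord_cons_cons]
      simp only [Finsupp.mapDomain_add, ← Finsupp.mapDomain_comp, Function.comp_def,
        Finsupp.mapDomain_single, shuffleWord_nil_left,
        List.cons_append, List.nil_append, List.append_assoc, List.singleton_append]
      abel
  | c :: p', [] =>
      have h1 : shuffleWord d (p' ++ [a]) [b] =
          Finsupp.mapDomain (· ++ [a]) (shuffleWord d p' [b]) +
          Finsupp.mapDomain (· ++ [b]) (shuffleWord d (p' ++ [a]) []) := by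
        simpa using shuffle_snoc d p' [] a b
      rw [show ([] : Word d) ++ [b] = [b] from rfl,
        show (c :: p') ++ [a] = c :: (p' ++ [a]) from rfl,
        shuffleWord_cons_cons, h1]
      rw [shuffleWord_nil_right, shuffleWord_nil_right,
        shuffleWord_cons_cons]
      simp only [Finsupp.mapDomain_add, ← Finsupp.mapDomain_comp, Function.comp_def,
        Finsupp.mapDomain_single, shuffleWord_nil_right,
        List.cons_append, List.nil_append, List.append_assoc, List.singleton_append]
      abel
  | c :: p', e :: q' =>
      have h1 : shuffleWord d (p' ++ [a]) (e :: (q' ++ [b])) =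
          Finsupp.mapDomain (· ++ [a]) (shuffleWord d p' (e :: (q' ++ [b]))) +
          Finsupp.mapDomain (· ++ [b]) (shuffleWord d (p' ++ [a]) (e :: q')) := by
        simpa using shuffle_snoc d p' (e :: q') a b
      have h2 : shuffleWord d (c :: (p' ++ [a])) (q' ++ [b]) =
          Finsupp.mapDomain (· ++ [a]) (shuffleWord d (c :: p') (q' ++ [b])) +
          Finsupp.mapDomain (· ++ [b]) (shuffleWord d (c :: (p' ++ [a])) q') := by
        simpa using shuffle_snoc d (c :: p') q' a b
      rw [show (c :: p') ++ [a] = c :: (p' ++ [a]) from rfl,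
        show (e :: q') ++ [b] = e :: (q' ++ [b]) from rfl,
        shuffleWord_cons_cons, h1, h2,
        shuffleWord_cons_cons d c e p' (q' ++ [b]),
        shuffleWord_cons_cons d c e (p' ++ [a]) q']
      simp only [Finsupp.mapDomain_add, ← Finsupp.mapDomain_comp, Function.comp_def,
        List.cons_append]
      abel
  termination_by p.length + q.length
  decreasing_by all_goals simp [List.length_append]

theorem shuffle_rev (d : ℕ) (u v : Word d) :
    Finsupp.mapDomain List.reverse (shuffleWord d u v) =
      shuffleWord d u.reverse v.reverse := by
  match u, v with
  | [], v => simp [shuffleWord_nil_left, Finsupp.mapDomain_single]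
  | a :: u, [] =>
      simp [shuffleWord_nil_left, shuffleWord_nil_right, Finsupp.mapDomain_single]
  | a :: u, b :: v =>
      rw [shuffleWord_cons_cons, Finsupp.mapDomain_add,
        ← Finsupp.mapDomain_comp, ← Finsupp.mapDomain_comp]
      have ca : List.reverse ∘ List.cons a = (· ++ [a]) ∘ (List.reverse : Word d → Word d) := by
        funext l; simp
      have cb : List.reverse ∘ List.cons b = (· ++ [b]) ∘ (List.reverse : Word d → Word d) := by
        funext l; simp
      rw [ca, cb, Finsupp.mapDomain_comp, Finsupp.mapDomain_comp,
        shuffle_rev d u (b :: v), shuffle_rev d (a :: u) v,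
        List.reverse_cons, List.reverse_cons]
      exact (shuffle_snoc d u.reverse v.reverse a b).symm
  termination_by u.length + v.length

/-- The shuffle product as a bilinear map. -/
noncomputable def shL (d : ℕ) : KA d →ₗ[ℝ] KA d →ₗ[ℝ] KA d :=
  Finsupp.lsum ℝ fun u => LinearMap.toSpanSingleton ℝ (KA d →ₗ[ℝ] KA d)
    (Finsupp.lsum ℝ fun v => LinearMap.toSpanSingleton ℝ (KA d) (shuffleWord d u v))

lemma sh_eq (d : ℕ) (x y : KA d) : sh d x y = shL d x y := by
  rw [sh]
  simp only [shL, Finsupp.lsum_apply, LinearMap.toSpanSingleton_apply, Finsupp.sum,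
    LinearMap.sum_apply, LinearMap.smul_apply, Finset.smul_sum, smul_smul]

lemma sh_single_single (d : ℕ) (u v : Word d) (c e : ℝ) :
    sh d (Finsupp.single u c) (Finsupp.single v e) = (c * e) • shuffleWord d u v := by
  rw [sh]
  rw [Finsupp.sum_single_index (by simp)]
  rw [Finsupp.sum_single_index (by simp)]

lemma sh_zero_left (d : ℕ) (y : KA d) : sh d 0 y = 0 := by
  simp [sh_eq]

lemma sh_zero_right (d : ℕ) (x : KA d) : sh d x 0 = 0 := by
  simp [sh_eq]

lemma sh_add_left (d : ℕ) (x x' y : KA d) : sh d (x + x') y = sh d x y + sh d x' y := by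
  simp [sh_eq]

lemma sh_add_right (d : ℕ) (x y y' : KA d) : sh d x (y + y') = sh d x y + sh d x y' := by
  simp [sh_eq]

lemma sh_sub_left (d : ℕ) (x x' y : KA d) : sh d (x - x') y = sh d x y - sh d x' y := by
  simp [sh_eq]

lemma sh_sub_right (d : ℕ) (x y y' : KA d) : sh d x (y - y') = sh d x y - sh d x y' := by
  simp [sh_eq]

/-- Reversal as a linear endomorphism. -/
noncomputable def mapRev (d : ℕ) : KA d →ₗ[ℝ] KA d :=
  Finsupp.lmapDomain ℝ ℝ List.reverse

lemma mapRev_apply (d : ℕ) (x : KA d) :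
    mapRev d x = Finsupp.mapDomain List.reverse x := rfl

lemma mapRev_single (d : ℕ) (w : Word d) (c : ℝ) :
    mapRev d (Finsupp.single w c) = Finsupp.single w.reverse c := by
  rw [mapRev_apply, Finsupp.mapDomain_single]

lemma mapRev_sh (d : ℕ) (x y : KA d) :
    mapRev d (sh d x y) = sh d (mapRev d x) (mapRev d y) := by
  induction x using Finsupp.induction_linear with
  | zero => simp [sh_zero_left]
  | add a b ha hb => simp [sh_add_left, map_add, ha, hb]
  | single u c =>
    induction y using Finsupp.induction_linear with
    | zero => simp [sh_zero_right]
    | add a b ha hb => simp [sh_add_right, map_add, ha, hb]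
    | single v e =>
      rw [sh_single_single, map_smul, mapRev_apply, shuffle_rev,
        mapRev_single, mapRev_single, sh_single_single]

lemma admissible_append_zero {d : ℕ} {w : Word d} (h : Admissible d w) :
    Admissible d (w ++ [0]) := by
  induction h with
  | nil => exact Admissible.zero Admissible.nil
  | zero _ ih => exact Admissible.zero ih
  | pair a ha _ ih => exact Admissible.pair a ha ih

lemma admissible_append_pair {d : ℕ} {w : Word d} (a : Fin (d+1)) (ha : a ≠ 0)
    (h : Admissible d w) : Admissible d (w ++ [a, a]) := by
  induction h with
  | nil => exact Admissible.pair a ha Admissible.nil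
  | zero _ ih => exact Admissible.zero ih
  | pair b hb _ ih => exact Admissible.pair b hb ih

lemma admissible_reverse {d : ℕ} {w : Word d} (h : Admissible d w) :
    Admissible d w.reverse := by
  induction h with
  | nil => exact Admissible.nil
  | zero _ ih =>
      rw [List.reverse_cons]
      exact admissible_append_zero ih
  | pair a ha _ ih =>
      rw [List.reverse_cons, List.reverse_cons, List.append_assoc]
      exact admissible_append_pair a ha ih

lemma admissible_reverse_iff {d : ℕ} (w : Word d) :
    Admissible d w.reverse ↔ Admissible d w := by
  constructor
  · intro h
    have := admissible_reverse h
    rwa [List.reverse_reverse] at this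
  · exact admissible_reverse

lemma Ebar_reverse (d : ℕ) (t : ℝ) (w : Word d) :
    Ebar d t w.reverse = Ebar d t w := by
  unfold Ebar nc zc dc
  rw [List.count_reverse, List.length_reverse]
  by_cases h : Admissible d w
  · rw [if_pos h, if_pos ((admissible_reverse_iff w).mpr h)]
  · rw [if_neg h, if_neg (fun hc => h ((admissible_reverse_iff w).mp hc))]

/-- The expectation functional as a linear map. -/
noncomputable def ElinL (d : ℕ) (t : ℝ) : KA d →ₗ[ℝ] ℝ :=
  Finsupp.lsum ℝ fun w => LinearMap.toSpanSingleton ℝ ℝ (Ebar d t w)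

lemma EbarL_eq (d : ℕ) (t : ℝ) (x : KA d) : EbarL d t x = ElinL d t x := by
  rw [EbarL, ElinL, Finsupp.lsum_apply]
  refine Finsupp.sum_congr fun w _ => ?_
  rw [LinearMap.toSpanSingleton_apply, smul_eq_mul]

lemma ElinL_single (d : ℕ) (t : ℝ) (w : Word d) (c : ℝ) :
    ElinL d t (Finsupp.single w c) = c * Ebar d t w := by
  rw [ElinL, Finsupp.lsum_single, LinearMap.toSpanSingleton_apply, smul_eq_mul]

lemma ElinL_mapRev (d : ℕ) (t : ℝ) (x : KA d) :
    ElinL d t (mapRev d x) = ElinL d t x := by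
  induction x using Finsupp.induction_linear with
  | zero => simp
  | add a b ha hb => simp [map_add, ha, hb]
  | single w c => rw [mapRev_single, ElinL_single, ElinL_single, Ebar_reverse]

lemma ElinL_sh_rev (d : ℕ) (t : ℝ) (u : Word d) (z : KA d) (hz : mapRev d z = z) :
    ElinL d t (sh d (Finsupp.single u 1) z) =
      ElinL d t (sh d (Finsupp.single u.reverse 1) z) := by
  conv_lhs => rw [← ElinL_mapRev, mapRev_sh, mapRev_single, hz]

lemma wordLift_single (d : ℕ) (f : Word d → KA d) (w : Word d) (c : ℝ) :
    wordLift d f (Finsupp.single w c) = c • f w := by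
  rw [wordLift, Finsupp.lsum_single, LinearMap.toSpanSingleton_apply]

lemma Sa_single (d : ℕ) (w : Word d) :
    Sa d (Finsupp.single w 1) = Finsupp.single w.reverse ((-1 : ℝ) ^ w.length) := by
  rw [Sa, wordLift_single, one_smul]

lemma EE_single (d : ℕ) (t : ℝ) (w : Word d) (c : ℝ) :
    EE d t (Finsupp.single w c) = Finsupp.single ([] : Word d) (c * Ebar d t w) := by
  rw [EE, wordLift_single, Finsupp.smul_single, smul_eq_mul]

lemma EE_apply (d : ℕ) (t : ℝ) (x : KA d) :
    EE d t x = Finsupp.single ([] : Word d) (ElinL d t x) := by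
  induction x using Finsupp.induction_linear with
  | zero => simp
  | add a b ha hb => rw [map_add, map_add, ha, hb, Finsupp.single_add]
  | single w c => rw [EE_single, ElinL_single]

lemma J_nil (d : ℕ) :
    (idE d - nuE d) (Finsupp.single ([] : Word d) 1) = 0 := by
  rw [LinearMap.sub_apply, nuE, wordLift_single, idE, LinearMap.id_apply]
  simp

lemma J_single_ne (d : ℕ) {w : Word d} (hw : w ≠ []) :
    (idE d - nuE d) (Finsupp.single w 1) = Finsupp.single w 1 := by
  rw [LinearMap.sub_apply, nuE, wordLift_single, idE, LinearMap.id_apply,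
    if_neg hw]
  simp

lemma conv_single (d : ℕ) (X Y : KA d →ₗ[ℝ] KA d) (w : Word d) :
    conv d X Y (Finsupp.single w 1) =
      ∑ k ∈ Finset.range (w.length + 1),
        sh d (X (Finsupp.single (w.take k) 1)) (Y (Finsupp.single (w.drop k) 1)) := by
  rw [conv, wordLift_single, one_smul]

/-- The full letter-by-letter shuffle of a word. -/
noncomputable def lettersSh (d : ℕ) : Word d → KA d
  | [] => Finsupp.single [] 1
  | a :: w => sh d (Finsupp.single [a] 1) (lettersSh d w)

lemma convPow_J_vanish (d : ℕ) :
    ∀ (k : ℕ) (w : Word d), w.length < k →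
      convPow d (idE d - nuE d) k (Finsupp.single w 1) = 0 := by
  intro k
  induction k with
  | zero => intro w hw; omega
  | succ k ih =>
      intro w hw
      rw [convPow, conv_single]
      refine Finset.sum_eq_zero fun j hj => ?_
      match j with
      | 0 =>
          rw [List.take_zero, J_nil, sh_zero_left]
      | j + 1 =>
          rw [Finset.mem_range] at hj
          have hlen : (w.drop (j+1)).length < k := by
            rw [List.length_drop]; omega
          rw [ih _ hlen, sh_zero_right]

lemma convPow_J_letters (d : ℕ) :
    ∀ (k : ℕ) (w : Word d), w.length = k →
      convPow d (idE d - nuE d) k (Finsupp.single w 1) = lettersSh d w := by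
  intro k
  induction k with
  | zero =>
      intro w hw
      rw [List.length_eq_zero_iff] at hw
      subst hw
      rw [convPow, nuE, wordLift_single, if_pos rfl, one_smul, lettersSh]
  | succ k ih =>
      intro w hw
      match w with
      | [] => simp at hw
      | a :: w' =>
          rw [convPow, conv_single]
          rw [Finset.sum_eq_single_of_mem 1
            (Finset.mem_range.mpr (by simp [hw]))]
          · have h1 : (a :: w').take 1 = [a] := rfl
            have h2 : (a :: w').drop 1 = w' := rfl
            rw [h1, h2, J_single_ne d (by simp), ih w' (by simpa using hw),
              lettersSh]
          · intro j hj hj1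
            match j with
            | 0 => rw [List.take_zero, J_nil, sh_zero_left]
            | j + 1 =>
                have hlen : ((a :: w').drop (j+1)).length < k := by
                  rw [List.length_drop]
                  rw [Finset.mem_range] at hj
                  simp only [List.length_cons] at hj hw ⊢
                  omega
                rw [convPow_J_vanish d k _ hlen, sh_zero_right]

lemma mapRev_lettersSh (d : ℕ) (w : Word d) :
    mapRev d (lettersSh d w) = lettersSh d w := by
  induction w with
  | nil => rw [lettersSh, mapRev_single]; rfl
  | cons a w ih =>
      rw [lettersSh, mapRev_sh, mapRev_single, ih]
      rfl

theorem stmt_4 (d m : ℕ) (hd : 1 ≤ d) (hm : 2 ≤ m) (hme : Even m)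
    (t : ℝ) (ht : 0 < t)
    {H : Type*} [NormedAddCommGroup H] [InnerProductSpace ℝ H]
    (Vf : Word d → H) :
    ip d t Vf m ((idE d - EE d t) ∘ₗ (idE d - Sa d))
                ((idE d - EE d t) ∘ₗ convPow d (idE d - nuE d) m) = 0 := by
  rw [ip]
  refine Finset.sum_eq_zero fun u _ => Finset.sum_eq_zero fun v _ => ?_
  set U : Word d := List.ofFn u with hU
  set V : Word d := List.ofFn v with hV
  have hUlen : U.length = m := List.length_ofFn (f := u)
  have hVlen : V.length = m := List.length_ofFn (f := v)
  have hXi : (idE d - Sa d) (Finsupp.single U 1) =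
      Finsupp.single U 1 - Finsupp.single U.reverse 1 := by
    rw [LinearMap.sub_apply, Sa_single, hUlen, hme.neg_one_pow, idE,
      LinearMap.id_apply]
  have hX : ((idE d - EE d t) ∘ₗ (idE d - Sa d)) (Finsupp.single U 1) =
      Finsupp.single U 1 - Finsupp.single U.reverse 1 := by
    rw [LinearMap.comp_apply, hXi, LinearMap.sub_apply, idE, LinearMap.id_apply,
      EE_apply, map_sub, ElinL_single, ElinL_single, Ebar_reverse]
    simp
  have hY : ((idE d - EE d t) ∘ₗ convPow d (idE d - nuE d) m) (Finsupp.single V 1) =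
      lettersSh d V - Finsupp.single ([] : Word d) (ElinL d t (lettersSh d V)) := by
    rw [LinearMap.comp_apply, convPow_J_letters d m V hVlen, LinearMap.sub_apply,
      idE, LinearMap.id_apply, EE_apply]
  rw [hX, hY, sh_sub_left, sh_sub_right, sh_sub_right, EbarL_eq, map_sub, map_sub,
    map_sub]
  have key : ElinL d t (sh d (Finsupp.single U 1) (lettersSh d V)) =
      ElinL d t (sh d (Finsupp.single U.reverse 1) (lettersSh d V)) :=
    ElinL_sh_rev d t U _ (mapRev_lettersSh d V)
  have e1 : ∀ w : Word d, ElinL d t (sh d (Finsupp.single w 1)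
      (Finsupp.single ([] : Word d) (ElinL d t (lettersSh d V)))) =
      ElinL d t (lettersSh d V) * Ebar d t w := by
    intro w
    rw [sh_single_single, shuffleWord_nil_right, map_smul, ElinL_single,
      smul_eq_mul]
    ring
  rw [key, e1, e1, Ebar_reverse]
  ring
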